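/- Let L_d : M₃(ℝ) × M₃(ℝ) → ℝ be Fréchet differentiable and left SO(3)-invariant, i.e. L_d(A g, A h) = L_d(g, h) for all A ∈ SO(3) and all g, h ∈ M₃(ℝ), and define the reduced discrete Lagrangian l_d(W) := L_d(I, W). Then for all g_{k-1}, g_k, g_{k+1} ∈ SO(3), setting W_{k-1} := g_{k-1}ᵀ g_k and W_k := g_kᵀ g_{k+1}, and for every skew-symmetric 3×3 matrix η, one has ⟨D₁L_d(g_k, g_{k+1}) + D₂L_d(g_{k-1}, g_k), g_k η⟩ = ⟨l'_d(W_{k-1}), W_{k-1} η⟩ − ⟨l'_d(W_k), η W_k⟩, where ⟨A, B⟩ = trace(Aᵀ B) and D₁L_d, D₂L_d, l'_d are the gradient matrices with respect to this inner product. Consequently, the left-hand sides of the unreduced discrete nonholonomic equations and of the discrete Euler–Poincaré–Suslov equations agree on all constrained variation directions δg_k = g_k η, so the two sets of dynamical equations are equivalent. -/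

import Mathlib

open Matrix

attribute [local instance] Matrix.frobeniusNormedAddCommGroup Matrix.frobeniusNormedSpace
attribute [local instance] Matrix.frobeniusNormedRing Matrix.frobeniusNormedAlgebra

local notation "M3" => Matrix (Fin 3) (Fin 3) ℝ

/-- For a left `SO(3)`-invariant differentiable discrete Lagrangian
`L_d` with gradient matrices `D₁L_d, D₂L_d` (w.r.t. the Frobenius inner product
`⟨A,B⟩ = trace(AᵀB)`) and reduced discrete Lagrangian `l_d(W) = L_d(I,W)` (whose
gradient is `l'_d(W) = D₂L_d(I,W)`), for `g_{k-1}, g_k, g_{k+1} ∈ SO(3)`,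
`W_{k-1} = g_{k-1}ᵀ g_k`, `W_k = g_kᵀ g_{k+1}`, and any skew-symmetric `η`,
`⟨D₁L_d(g_k,g_{k+1}) + D₂L_d(g_{k-1},g_k), g_k η⟩
  = ⟨l'_d(W_{k-1}), W_{k-1} η⟩ − ⟨l'_d(W_k), η W_k⟩`:
the unreduced discrete nonholonomic equations and the discrete
Euler–Poincaré–Suslov equations agree on all constrained variation directions. -/
theorem discrete_unreduced_reduced_equivalence
    (Ld : Matrix (Fin 3) (Fin 3) ℝ → Matrix (Fin 3) (Fin 3) ℝ → ℝ)
    (hdiff : Differentiable ℝ (fun p : Matrix (Fin 3) (Fin 3) ℝ × Matrix (Fin 3) (Fin 3) ℝ => Ld p.1 p.2))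
    (D1 D2 : Matrix (Fin 3) (Fin 3) ℝ → Matrix (Fin 3) (Fin 3) ℝ →
      Matrix (Fin 3) (Fin 3) ℝ)
    (hD1 : ∀ g h X : Matrix (Fin 3) (Fin 3) ℝ,
      HasDerivAt (fun s : ℝ => Ld (g + s • X) h) ((D1 g h)ᵀ * X).trace 0)
    (hD2 : ∀ g h X : Matrix (Fin 3) (Fin 3) ℝ,
      HasDerivAt (fun s : ℝ => Ld g (h + s • X)) ((D2 g h)ᵀ * X).trace 0)
    (hInv : ∀ A g h : Matrix (Fin 3) (Fin 3) ℝ,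
      Aᵀ * A = 1 → A.det = 1 → Ld (A * g) (A * h) = Ld g h)
    (g₀ g₁ g₂ : Matrix (Fin 3) (Fin 3) ℝ)
    (h₀ : g₀ᵀ * g₀ = 1) (hd₀ : g₀.det = 1)
    (h₁ : g₁ᵀ * g₁ = 1) (hd₁ : g₁.det = 1)
    (h₂ : g₂ᵀ * g₂ = 1) (hd₂ : g₂.det = 1)
    (η : Matrix (Fin 3) (Fin 3) ℝ) (hη : ηᵀ = -η) :
    ((D1 g₁ g₂ + D2 g₀ g₁)ᵀ * (g₁ * η)).trace =
      ((D2 1 (g₀ᵀ * g₁))ᵀ * ((g₀ᵀ * g₁) * η)).trace -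
        ((D2 1 (g₁ᵀ * g₂))ᵀ * (η * (g₁ᵀ * g₂))).trace := by
  classical
  have h₀' : g₀ * g₀ᵀ = (1 : M3) := mul_eq_one_comm.mp h₀
  have h₁' : g₁ * g₁ᵀ = (1 : M3) := mul_eq_one_comm.mp h₁
  -- Step A : ⟨D1(g₁,g₂), g₁η⟩ = ⟨D1(1,W₁), η⟩   (W₁ = g₁ᵀ g₂)
  have eqA : (fun s : ℝ => Ld (g₁ + s • (g₁ * η)) g₂) =
      fun s : ℝ => Ld (1 + s • η) (g₁ᵀ * g₂) := by
    funext s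
    have h := hInv g₁ (1 + s • η) (g₁ᵀ * g₂) h₁ hd₁
    rw [← h]
    congr 1
    · rw [mul_add, mul_one, Matrix.mul_smul]
    · rw [← mul_assoc, h₁', one_mul]
  have tA : ((D1 g₁ g₂)ᵀ * (g₁ * η)).trace = ((D1 1 (g₁ᵀ * g₂))ᵀ * η).trace := by
    have hL := hD1 g₁ g₂ (g₁ * η)
    rw [eqA] at hL
    exact hL.unique (hD1 1 (g₁ᵀ * g₂) η)
  -- Step B : ⟨D2(g₀,g₁), g₁η⟩ = ⟨D2(1,W₀), W₀η⟩   (W₀ = g₀ᵀ g₁)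
  have eqB : (fun s : ℝ => Ld g₀ (g₁ + s • (g₁ * η))) =
      fun s : ℝ => Ld 1 ((g₀ᵀ * g₁) + s • ((g₀ᵀ * g₁) * η)) := by
    funext s
    have h := hInv g₀ 1 ((g₀ᵀ * g₁) + s • ((g₀ᵀ * g₁) * η)) h₀ hd₀
    rw [← h, mul_one]
    congr 1
    rw [mul_add, Matrix.mul_smul, ← mul_assoc, h₀', one_mul, ← mul_assoc, ← mul_assoc,
      h₀', one_mul]
  have tB : ((D2 g₀ g₁)ᵀ * (g₁ * η)).trace
      = ((D2 1 (g₀ᵀ * g₁))ᵀ * ((g₀ᵀ * g₁) * η)).trace := by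
    have hL := hD2 g₀ g₁ (g₁ * η)
    rw [eqB] at hL
    exact hL.unique (hD2 1 (g₀ᵀ * g₁) ((g₀ᵀ * g₁) * η))
  -- derivative along straight lines = fderiv applied to the direction
  have hline : ∀ (p v : M3 × M3), HasDerivAt (fun s : ℝ => p + s • v) v 0 := by
    intro p v
    have h := ((hasDerivAt_id (0 : ℝ)).smul_const v).const_add p
    simp only [id, one_smul] at h
    exact h
  have compAt : ∀ (p v : M3 × M3),
      HasDerivAt (fun s : ℝ => Ld (p + s • v).1 (p + s • v).2)
        (fderiv ℝ (fun q : M3 × M3 => Ld q.1 q.2) p v) 0 := by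
    intro p v
    have hp : p + (0 : ℝ) • v = p := by simp
    have F : HasFDerivAt (fun q : M3 × M3 => Ld q.1 q.2)
        (fderiv ℝ (fun q : M3 × M3 => Ld q.1 q.2) p) (p + (0 : ℝ) • v) := by
      rw [hp]; exact (hdiff p).hasFDerivAt
    exact F.comp_hasDerivAt 0 (hline p v)
  -- Step C : ⟨D1(1,W), η⟩ + ⟨D2(1,W), ηW⟩ = 0 for any W
  have hC : ∀ W : M3, ((D1 1 W)ᵀ * η).trace + ((D2 1 W)ᵀ * (η * W)).trace = 0 := by
    intro W
    -- fderiv applied to (η, 0), (0, ηW), (η, ηW)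
    have c1' : HasDerivAt (fun s : ℝ => Ld (1 + s • η) W)
        (fderiv ℝ (fun q : M3 × M3 => Ld q.1 q.2) (1, W) ((η, 0) : M3 × M3)) 0 := by
      simpa [Prod.smul_def] using compAt (1, W) (η, 0)
    have e1 : fderiv ℝ (fun q : M3 × M3 => Ld q.1 q.2) (1, W) ((η, 0) : M3 × M3)
        = ((D1 1 W)ᵀ * η).trace := c1'.unique (hD1 1 W η)
    have c2' : HasDerivAt (fun s : ℝ => Ld 1 (W + s • (η * W)))
        (fderiv ℝ (fun q : M3 × M3 => Ld q.1 q.2) (1, W) ((0, η * W) : M3 × M3)) 0 := by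
      simpa [Prod.smul_def] using compAt (1, W) (0, η * W)
    have e2 : fderiv ℝ (fun q : M3 × M3 => Ld q.1 q.2) (1, W) ((0, η * W) : M3 × M3)
        = ((D2 1 W)ᵀ * (η * W)).trace := c2'.unique (hD2 1 W (η * W))
    have esplit : fderiv ℝ (fun q : M3 × M3 => Ld q.1 q.2) (1, W) ((η, η * W) : M3 × M3)
        = ((D1 1 W)ᵀ * η).trace + ((D2 1 W)ᵀ * (η * W)).trace := by
      have hv : ((η, η * W) : M3 × M3) = (η, 0) + (0, η * W) := by
        simp [Prod.ext_iff]
      rw [hv, map_add, e1, e2]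
    -- the exponential curve stays in SO(3)
    have horth : ∀ s : ℝ,
        (NormedSpace.exp (s • η))ᵀ * NormedSpace.exp (s • η) = (1 : M3) := by
      intro s
      have ht : (NormedSpace.exp (s • η))ᵀ = NormedSpace.exp (-(s • η)) := by
        rw [← Matrix.exp_transpose]
        congr 1
        rw [Matrix.transpose_smul, hη, smul_neg]
      rw [ht, ← Matrix.exp_add_of_commute _ _ (Commute.neg_left (Commute.refl (s • η))),
        neg_add_cancel, NormedSpace.exp_zero]
    have hdet : ∀ s : ℝ, (NormedSpace.exp (s • η)).det = 1 := by
      intro s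
      have hsq : (NormedSpace.exp (s • η)).det ^ 2 = 1 := by
        have h := congrArg Matrix.det (horth s)
        rwa [Matrix.det_mul, Matrix.det_transpose, ← sq, Matrix.det_one] at h
      have hpos : 0 ≤ (NormedSpace.exp (s • η)).det := by
        have hhalf : NormedSpace.exp (s • η)
            = NormedSpace.exp ((s / 2) • η) * NormedSpace.exp ((s / 2) • η) := by
          rw [← Matrix.exp_add_of_commute _ _ (Commute.refl ((s / 2) • η)), ← add_smul]
          norm_num
        rw [hhalf, Matrix.det_mul]
        exact mul_self_nonneg _
      nlinarith [hsq, hpos]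
    have hc1 : HasDerivAt (fun s : ℝ => NormedSpace.exp (s • η)) η 0 := by
      have h := hasDerivAt_exp_smul_const (𝕂 := ℝ) η 0
      simp only [zero_smul, NormedSpace.exp_zero, one_mul] at h
      exact h
    have hc2 : HasDerivAt (fun s : ℝ => NormedSpace.exp (s • η) * W) (η * W) 0 :=
      hc1.mul_const W
    have hc : HasDerivAt
        (fun s : ℝ => ((NormedSpace.exp (s • η), NormedSpace.exp (s • η) * W) : M3 × M3))
        ((η, η * W) : M3 × M3) 0 := hc1.prodMk hc2
    have hpt : ((NormedSpace.exp ((0 : ℝ) • η), NormedSpace.exp ((0 : ℝ) • η) * W) : M3 × M3)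
        = ((1, W) : M3 × M3) := by
      simp [NormedSpace.exp_zero]
    have F : HasFDerivAt (fun q : M3 × M3 => Ld q.1 q.2)
        (fderiv ℝ (fun q : M3 × M3 => Ld q.1 q.2) (1, W))
        ((NormedSpace.exp ((0 : ℝ) • η), NormedSpace.exp ((0 : ℝ) • η) * W) : M3 × M3) := by
      rw [hpt]; exact (hdiff (1, W)).hasFDerivAt
    have hcomp := F.comp_hasDerivAt 0 hc
    have hconst : (fun s : ℝ =>
        Ld (NormedSpace.exp (s • η)) (NormedSpace.exp (s • η) * W))
        = fun _ : ℝ => Ld 1 W := by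
      funext s
      have h := hInv (NormedSpace.exp (s • η)) 1 W (horth s) (hdet s)
      simpa using h
    simp only [Function.comp_def] at hcomp
    rw [hconst] at hcomp
    have hzero : fderiv ℝ (fun q : M3 × M3 => Ld q.1 q.2) (1, W) ((η, η * W) : M3 × M3) = 0 :=
      hcomp.unique (hasDerivAt_const 0 _)
    rw [esplit] at hzero
    exact hzero
  -- combine everything
  have hCW₁ := hC (g₁ᵀ * g₂)
  have expand : ((D1 g₁ g₂ + D2 g₀ g₁)ᵀ * (g₁ * η)).trace
      = ((D1 g₁ g₂)ᵀ * (g₁ * η)).trace + ((D2 g₀ g₁)ᵀ * (g₁ * η)).trace := by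
    rw [Matrix.transpose_add, Matrix.add_mul, Matrix.trace_add]
  rw [expand, tA, tB]
  linarith [hCW₁]
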